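/- Fix ε > 0 and let M ≥ 21/ε². Let S be a set of M i.i.d. uniformly random strings in {A,C,G,T}^n. Then with probability at least 1 − exp(−n), the length of every common supersequence of all strings in S is at least (2.5 − ε)n. -/

import Mathlib

open Finset
open scoped Classical

section Aux

variable {α : Type*} [DecidableEq α]

/-- Greedy matching step. -/
lemma aux_greedy_step {c : α} {ws L : List α} (h : (c :: ws).Sublist L) :
    c ∈ L ∧ ws.Sublist (L.drop (L.idxOf c + 1)) := by
  induction L generalizing ws with
  | nil => simp at h
  | cons x L ih =>
    cases h with
    | cons _ h =>
      rcases eq_or_ne x c with rfl | hxc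
      · exact ⟨List.mem_cons_self, by
          simpa [List.idxOf_cons_self] using ((List.sublist_cons_self x ws).trans h)⟩
      · obtain ⟨hc, hs⟩ := ih h
        refine ⟨List.mem_cons_of_mem _ hc, ?_⟩
        rw [List.idxOf_cons_ne _ (by simpa using hxc)]
        simpa using hs
    | cons_cons _ h =>
      exact ⟨by simp, by simpa [List.idxOf_cons_self] using h⟩

variable [Fintype α]

/-- Rank of `c` among characters, ordered by first occurrence in `L`. -/
def auxRnk (L : List α) (c : α) : ℕ :=
  (univ.filter fun c' => L.idxOf c' ≤ L.idxOf c).card - 1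

lemma auxRnk_le_indexOf {L : List α} {c : α} (hc : c ∈ L) : auxRnk L c ≤ L.idxOf c := by
  have hcard : (univ.filter fun c' => L.idxOf c' ≤ L.idxOf c).card ≤ L.idxOf c + 1 := by
    have := Finset.card_le_card_of_injOn (fun c' => L.idxOf c')
      (s := univ.filter fun c' => L.idxOf c' ≤ L.idxOf c)
      (t := Finset.range (L.idxOf c + 1))
      (fun c' hc' => by
        simp only [Finset.coe_filter, Set.mem_setOf_eq, Finset.mem_filter, Finset.mem_univ, true_and] at hc'
        simp only [Finset.coe_range, Set.mem_Iio, Finset.mem_range]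
        omega)
      (fun a ha b hb hab => by
        simp only [Finset.coe_filter, Set.mem_setOf_eq, Finset.mem_univ, true_and] at ha hb
        have hla : a ∈ L := List.idxOf_lt_length_iff.mp
          (lt_of_le_of_lt ha (List.idxOf_lt_length_iff.mpr hc))
        have hlb : b ∈ L := List.idxOf_lt_length_iff.mp
          (lt_of_le_of_lt hb (List.idxOf_lt_length_iff.mpr hc))
        exact (List.idxOf_inj hla).mp hab)
    simpa using this
  unfold auxRnk; omega

lemma auxRnk_lt_card {L : List α} {c : α} [Nonempty α] : auxRnk L c < Fintype.card α := by
  have h1 : (univ.filter fun c' => L.idxOf c' ≤ L.idxOf c).card ≤ Fintype.card α := by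
    simpa using Finset.card_filter_le univ (fun c' => L.idxOf c' ≤ L.idxOf c)
  have h2 : 0 < Fintype.card α := Fintype.card_pos
  unfold auxRnk; omega

lemma auxRnk_injOn {L : List α} {c d : α} (hc : c ∈ L) (hd : d ∈ L)
    (h : auxRnk L c = auxRnk L d) : c = d := by
  have key : ∀ {a b : α}, a ∈ L → b ∈ L → L.idxOf a < L.idxOf b →
      (univ.filter fun c' => L.idxOf c' ≤ L.idxOf a).card
        < (univ.filter fun c' => L.idxOf c' ≤ L.idxOf b).card := by
    intro a b ha hb hab
    apply Finset.card_lt_card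
    constructor
    · intro x hx
      simp only [Finset.mem_filter, Finset.mem_univ, true_and] at hx ⊢
      omega
    · intro hsub
      have := hsub (by simp : b ∈ univ.filter fun c' => L.idxOf c' ≤ L.idxOf b)
      simp only [Finset.mem_filter, Finset.mem_univ, true_and] at this
      omega
  have hpos : ∀ (a : α), 0 < (univ.filter fun c' => L.idxOf c' ≤ L.idxOf a).card := by
    intro a
    exact Finset.card_pos.mpr ⟨a, by simp⟩
  rcases lt_trichotomy (L.idxOf c) (L.idxOf d) with hlt | heq | hgt
  · exfalso
    have h1 := key hc hd hlt
    unfold auxRnk at h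
    have h2 := hpos c; have h3 := hpos d; omega
  · exact (List.idxOf_inj hc).mp heq
  · exfalso
    have h1 := key hd hc hgt
    unfold auxRnk at h
    have h2 := hpos c; have h3 := hpos d; omega

/-- Encoding of a subsequence by the ranks of greedy matching. -/
def auxEnc : List α → List α → List ℕ
  | _, [] => []
  | L, c :: ws => auxRnk L c :: auxEnc (L.drop (L.idxOf c + 1)) ws

@[simp] lemma auxEnc_nil (L : List α) : auxEnc L ([] : List α) = [] := rfl
@[simp] lemma auxEnc_cons (L : List α) (c : α) (ws : List α) :
    auxEnc L (c :: ws) = auxRnk L c :: auxEnc (L.drop (L.idxOf c + 1)) ws := rfl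

lemma auxEnc_length (L w : List α) : (auxEnc L w).length = w.length := by
  induction w generalizing L with
  | nil => rfl
  | cons c ws ih => simp [ih]

lemma auxEnc_mem_lt [Nonempty α] {L w : List α} {x : ℕ} (hx : x ∈ auxEnc L w) :
    x < Fintype.card α := by
  induction w generalizing L with
  | nil => simp at hx
  | cons c ws ih =>
    simp only [auxEnc_cons, List.mem_cons] at hx
    rcases hx with rfl | hx
    · exact auxRnk_lt_card
    · exact ih hx

lemma auxEnc_sum {L w : List α} (h : w.Sublist L) :
    ((auxEnc L w).map (· + 1)).sum ≤ L.length := by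
  induction w generalizing L with
  | nil => simp
  | cons c ws ih =>
    obtain ⟨hc, hs⟩ := aux_greedy_step h
    have hidx : L.idxOf c + 1 ≤ L.length := List.idxOf_lt_length_iff.mpr hc
    have hr := auxRnk_le_indexOf hc
    have := ih hs
    simp only [auxEnc_cons, List.map_cons, List.sum_cons, List.length_drop] at this ⊢
    omega

lemma auxEnc_inj {w₁ w₂ L : List α} (h₁ : w₁.Sublist L) (h₂ : w₂.Sublist L)
    (hlen : w₁.length = w₂.length) (henc : auxEnc L w₁ = auxEnc L w₂) : w₁ = w₂ := by
  induction w₁ generalizing L w₂ with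
  | nil => exact (List.length_eq_zero_iff.mp hlen.symm).symm
  | cons c ws ih =>
    cases w₂ with
    | nil => simp at hlen
    | cons d vs =>
      obtain ⟨hc, hsc⟩ := aux_greedy_step h₁
      obtain ⟨hd, hsd⟩ := aux_greedy_step h₂
      simp only [auxEnc_cons, List.cons.injEq] at henc
      obtain ⟨hr, ht⟩ := henc
      have hcd : c = d := auxRnk_injOn hc hd hr
      subst hcd
      have : ws = vs := ih hsc hsd (by simpa using hlen) ht
      rw [this]

end Aux

lemma aux_list_sum_map_succ {e : List ℕ} {n : ℕ} (he : e.length = n) :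
    (e.map (· + 1)).sum = ∑ i : Fin n, (e.get (Fin.cast he.symm i) + 1) := by
  subst he
  have h1 : e.map (· + 1) = List.ofFn (fun i : Fin e.length => e.get i + 1) := by
    conv_lhs => rw [← List.ofFn_get e]
    rw [List.map_ofFn]
    rfl
  rw [h1, List.sum_ofFn]
  simp [Fin.cast]

lemma aux_fits_card_le (n : ℕ) (L : List (Fin 4)) :
    ((univ.filter fun w : Fin n → Fin 4 => (List.ofFn w).Sublist L).card : ℕ) ≤
      (univ.filter fun r : Fin n → Fin 4 => ∑ i, ((r i : ℕ) + 1) ≤ L.length).card := by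
  have hlen : ∀ w : Fin n → Fin 4, (auxEnc L (List.ofFn w)).length = n := by
    intro w; rw [auxEnc_length, List.length_ofFn]
  apply Finset.card_le_card_of_injOn
    (fun w => fun i : Fin n => (⟨(auxEnc L (List.ofFn w)).get (Fin.cast (hlen w).symm i),
      auxEnc_mem_lt (List.get_mem _ _)⟩ : Fin 4))
  · intro w hw
    simp only [Finset.coe_filter, Set.mem_setOf_eq, Finset.mem_filter, Finset.mem_univ, true_and] at hw ⊢
    have := auxEnc_sum hw
    rw [aux_list_sum_map_succ (hlen w)] at this
    simpa using this
  · intro w₁ h₁ w₂ h₂ heq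
    simp only [Finset.coe_filter, Set.mem_setOf_eq, Finset.mem_univ, true_and] at h₁ h₂
    have henc : auxEnc L (List.ofFn w₁) = auxEnc L (List.ofFn w₂) := by
      apply List.ext_get (by rw [hlen w₁, hlen w₂])
      intro i hi1 hi2
      have := congrFun heq ⟨i, by rwa [hlen w₁] at hi1⟩
      simpa [Fin.ext_iff, Fin.cast] using this
    have := auxEnc_inj h₁ h₂ (by simp) henc
    exact List.ofFn_injective this

lemma aux_rank_count_le (n ℓ : ℕ) (lam : ℝ) (hlam : 0 ≤ lam) :
    (((univ.filter fun r : Fin n → Fin 4 => ∑ i, ((r i : ℕ) + 1) ≤ ℓ).card : ℝ)) ≤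
      Real.exp (lam * ℓ) * (∑ u : Fin 4, Real.exp (-lam * ((u : ℕ) + 1))) ^ n := by
  have step1 : ((univ.filter fun r : Fin n → Fin 4 => ∑ i, ((r i : ℕ) + 1) ≤ ℓ).card : ℝ)
      ≤ ∑ r : Fin n → Fin 4, Real.exp (lam * ℓ) * ∏ i, Real.exp (-lam * ((r i : ℕ) + 1)) := by
    rw [Finset.card_eq_sum_ones, Nat.cast_sum]
    rw [← Finset.sum_filter_add_sum_filter_not univ
      (fun r : Fin n → Fin 4 => ∑ i, ((r i : ℕ) + 1) ≤ ℓ)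
      (fun r => Real.exp (lam * ℓ) * ∏ i, Real.exp (-lam * ((r i : ℕ) + 1)))]
    have : ∀ r ∈ univ.filter fun r : Fin n → Fin 4 => ∑ i, ((r i : ℕ) + 1) ≤ ℓ,
        ((1 : ℕ) : ℝ) ≤ Real.exp (lam * ℓ) * ∏ i, Real.exp (-lam * ((r i : ℕ) + 1)) := by
      intro r hr
      simp only [Finset.mem_filter, Finset.mem_univ, true_and] at hr
      rw [← Real.exp_sum, ← Real.exp_add]
      simp only [Nat.cast_one]
      apply Real.one_le_exp
      have hsum : ∑ i, (-lam * (((r i : ℕ) : ℝ) + 1)) = -lam * ∑ i, (((r i : ℕ) : ℝ) + 1) := by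
        rw [Finset.mul_sum]
      rw [hsum]
      have hS : (∑ i, (((r i : ℕ) : ℝ) + 1)) ≤ (ℓ : ℝ) := by
        have : ((∑ i, ((r i : ℕ) + 1) : ℕ) : ℝ) ≤ (ℓ : ℝ) := Nat.cast_le.mpr hr
        simpa [Nat.cast_sum] using this
      nlinarith [hS, hlam]
    refine le_add_of_le_of_nonneg (Finset.sum_le_sum this) ?_
    apply Finset.sum_nonneg
    intro r _
    positivity
  calc ((univ.filter fun r : Fin n → Fin 4 => ∑ i, ((r i : ℕ) + 1) ≤ ℓ).card : ℝ)
      ≤ ∑ r : Fin n → Fin 4, Real.exp (lam * ℓ) * ∏ i, Real.exp (-lam * ((r i : ℕ) + 1)) :=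
        step1
    _ = Real.exp (lam * ℓ) * ∑ r : Fin n → Fin 4, ∏ i, Real.exp (-lam * ((r i : ℕ) + 1)) := by
        rw [Finset.mul_sum]
    _ = Real.exp (lam * ℓ) * ∏ _i : Fin n, ∑ u : Fin 4, Real.exp (-lam * ((u : ℕ) + 1)) := by
        rw [Finset.prod_univ_sum]
        rw [Fintype.piFinset_univ]
    _ = Real.exp (lam * ℓ) * (∑ u : Fin 4, Real.exp (-lam * ((u : ℕ) + 1))) ^ n := by
        rw [Finset.prod_const, Finset.card_univ, Fintype.card_fin]

lemma aux_phi_le (lam : ℝ) :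
    ∑ u : Fin 4, Real.exp (-lam * ((u : ℕ) + 1)) ≤
      4 * Real.exp (-(5/2) * lam + (9/8) * lam ^ 2) := by
  have c1 : Real.cosh ((3/2) * lam) ≤ Real.exp ((9/8) * lam ^ 2) := by
    calc Real.cosh ((3/2)*lam) ≤ Real.exp (((3/2)*lam)^2/2) := Real.cosh_le_exp_half_sq _
      _ = Real.exp ((9/8) * lam^2) := by ring_nf
  have c2 : Real.cosh ((1/2) * lam) ≤ Real.exp ((9/8) * lam ^ 2) := by
    calc Real.cosh ((1/2)*lam) ≤ Real.exp (((1/2)*lam)^2/2) := Real.cosh_le_exp_half_sq _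
      _ ≤ Real.exp ((9/8) * lam^2) := by
          apply Real.exp_le_exp.mpr; nlinarith [sq_nonneg lam]
  have hsum : ∑ u : Fin 4, Real.exp (-lam * ((u : ℕ) + 1))
      = Real.exp (-(5/2)*lam) * (2 * Real.cosh ((3/2)*lam) + 2 * Real.cosh ((1/2)*lam)) := by
    rw [Fin.sum_univ_four]
    rw [Real.cosh_eq, Real.cosh_eq]
    rw [show Real.exp (-(5/2)*lam) * (2 * ((Real.exp ((3/2)*lam) + Real.exp (-((3/2)*lam)))/2)
          + 2 * ((Real.exp ((1/2)*lam) + Real.exp (-((1/2)*lam)))/2))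
        = Real.exp (-(5/2)*lam) * Real.exp ((3/2)*lam)
          + Real.exp (-(5/2)*lam) * Real.exp (-((3/2)*lam))
          + Real.exp (-(5/2)*lam) * Real.exp ((1/2)*lam)
          + Real.exp (-(5/2)*lam) * Real.exp (-((1/2)*lam)) by ring]
    rw [← Real.exp_add, ← Real.exp_add, ← Real.exp_add, ← Real.exp_add]
    simp only [Fin.val_zero, Fin.val_one, Fin.val_two, show ((3:Fin 4).val) = 3 from rfl]
    push_cast
    ring_nf
  rw [hsum, Real.exp_add (-(5/2)*lam)]
  have h4 : 2 * Real.cosh ((3/2)*lam) + 2 * Real.cosh ((1/2)*lam)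
      ≤ 4 * Real.exp ((9/8)*lam^2) := by linarith
  nlinarith [Real.exp_pos (-(5/2)*lam), Real.exp_pos ((9/8)*lam^2)]

lemma aux_master (n M ℓ : ℕ) (ε : ℝ) (hε : 0 < ε)
    (hn : 1 ≤ (n : ℝ)) (hM : 21 / ε ^ 2 ≤ (M : ℝ))
    (hℓ : (ℓ : ℝ) ≤ (5/2 - ε) * n) :
    (4:ℝ)^ℓ * (Real.exp ((4*ε/9) * ℓ) *
        (∑ u : Fin 4, Real.exp (-(4*ε/9) * ((u : ℕ) + 1)))^n)^M
      ≤ Real.exp (-(n:ℝ)) * ((4:ℝ)^n)^M := by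
  obtain ⟨lam, hlam⟩ : ∃ l : ℝ, l = 4*ε/9 := ⟨_, rfl⟩
  rw [← hlam]
  have hlam0 : 0 ≤ lam := by rw [hlam]; positivity
  have hphi : ∑ u : Fin 4, Real.exp (-lam * ((u : ℕ) + 1))
      ≤ 4 * Real.exp (-(5/2)*lam + (9/8)*lam^2) := aux_phi_le lam
  have hphi0 : 0 ≤ ∑ u : Fin 4, Real.exp (-lam * ((u : ℕ) + 1)) :=
    Finset.sum_nonneg fun u _ => (Real.exp_pos _).le
  have hB0 : 0 ≤ Real.exp (lam * ℓ) * (∑ u : Fin 4, Real.exp (-lam * ((u : ℕ) + 1)))^n := by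
    positivity
  have hstep : (Real.exp (lam * ℓ) * (∑ u : Fin 4, Real.exp (-lam * ((u : ℕ) + 1)))^n)^M
      ≤ (Real.exp (lam * ℓ) * ((4:ℝ)^n * Real.exp (n * (-(5/2)*lam + (9/8)*lam^2))))^M := by
    apply pow_le_pow_left₀ hB0
    apply mul_le_mul_of_nonneg_left _ (Real.exp_pos _).le
    calc (∑ u : Fin 4, Real.exp (-lam * ((u : ℕ) + 1)))^n
        ≤ (4 * Real.exp (-(5/2)*lam + (9/8)*lam^2))^n := pow_le_pow_left₀ hphi0 hphi n
      _ = (4:ℝ)^n * Real.exp (n * (-(5/2)*lam + (9/8)*lam^2)) := by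
          rw [mul_pow, ← Real.exp_nat_mul]
  refine le_trans (mul_le_mul_of_nonneg_left hstep (by positivity)) ?_
  have exp4 : (4:ℝ)^ℓ = Real.exp (ℓ * Real.log 4) := by
    conv_lhs => rw [← Real.exp_log (show (0:ℝ) < 4 by norm_num)]
    rw [← Real.exp_nat_mul]
  have hrw : (4:ℝ)^ℓ * (Real.exp (lam * ℓ) * ((4:ℝ)^n * Real.exp (n * (-(5/2)*lam + (9/8)*lam^2))))^M
      = ((4:ℝ)^n)^M * Real.exp (ℓ * Real.log 4 + M * (lam * ℓ) + M * (n * (-(5/2)*lam + (9/8)*lam^2))) := by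
    rw [mul_pow, mul_pow, ← Real.exp_nat_mul, ← Real.exp_nat_mul, exp4]
    rw [show Real.exp ((ℓ:ℝ) * Real.log 4) * (Real.exp ((M:ℝ) * (lam * ℓ)) *
          (((4:ℝ)^n)^M * Real.exp ((M:ℝ) * ((n:ℝ) * (-(5/2)*lam + (9/8)*lam^2)))))
        = ((4:ℝ)^n)^M * (Real.exp ((ℓ:ℝ) * Real.log 4) * Real.exp ((M:ℝ) * (lam * ℓ))
            * Real.exp ((M:ℝ) * ((n:ℝ) * (-(5/2)*lam + (9/8)*lam^2)))) by ring]
    rw [← Real.exp_add, ← Real.exp_add]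
  rw [hrw, mul_comm (Real.exp (-(n:ℝ))) (((4:ℝ)^n)^M)]
  apply mul_le_mul_of_nonneg_left _ (by positivity)
  apply Real.exp_le_exp.mpr
  have hlog4 : Real.log 4 ≤ 1.39 := by
    rw [show (4:ℝ) = 2^2 by norm_num, Real.log_pow]
    have := Real.log_two_lt_d9
    push_cast
    nlinarith
  have hlog4' : 0 ≤ Real.log 4 := Real.log_nonneg (by norm_num)
  have hε2 : 0 < ε^2 := by positivity
  have hMpos : (0:ℝ) < M := lt_of_lt_of_le (by positivity) hM
  have hT : lam * ℓ + (n:ℝ) * (-(5/2)*lam + (9/8)*lam^2) ≤ -(2/9) * ε^2 * n := by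
    have h1 : lam * ℓ ≤ lam * ((5/2 - ε) * n) := mul_le_mul_of_nonneg_left hℓ hlam0
    have h2 : lam * ((5/2-ε)*n) + (n:ℝ) * (-(5/2)*lam + (9/8)*lam^2) = -(2/9)*ε^2*n := by
      rw [hlam]; ring
    linarith
  have hMT : (M:ℝ) * (lam * ℓ + (n:ℝ) * (-(5/2)*lam + (9/8)*lam^2)) ≤ -(14/3) * n := by
    have h1 := mul_le_mul_of_nonneg_left hT hMpos.le
    have hx : -(2/9) * ε^2 * (n:ℝ) ≤ 0 := by
      have : (0:ℝ) ≤ ε^2 * n := by positivity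
      linarith
    have h2 : (M:ℝ) * (-(2/9) * ε^2 * n) ≤ (21/ε^2) * (-(2/9) * ε^2 * n) :=
      mul_le_mul_of_nonpos_right hM hx
    have h3 : (21/ε^2) * (-(2/9) * ε^2 * n) = -(14/3) * n := by field_simp; ring
    linarith
  have hℓ4 : (ℓ:ℝ) * Real.log 4 ≤ (5/2) * n * 1.39 := by
    have h1 : (ℓ:ℝ) ≤ (5/2) * n := by nlinarith
    exact mul_le_mul h1 hlog4 hlog4' (by positivity)
  have expand : (M:ℝ) * (lam * ℓ) + (M:ℝ) * ((n:ℝ) * (-(5/2)*lam + (9/8)*lam^2))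
      = (M:ℝ) * (lam * ℓ + (n:ℝ) * (-(5/2)*lam + (9/8)*lam^2)) := by ring
  linarith

lemma aux_exists_ofFn {ℓ : ℕ} (L' : List (Fin 4)) (h : L'.length = ℓ) :
    ∃ v : Fin ℓ → Fin 4, List.ofFn v = L' := by
  subst h
  exact ⟨L'.get, List.ofFn_get L'⟩

/-- If ε > 0 and M ≥ 21/ε², then with probability at least 1 - e^{-n} over M
i.i.d. uniform strands in {A,C,G,T}^n, every common supersequence of the strands
has length at least (2.5 - ε)n. -/
theorem stmt7 (n M : ℕ) (ε : ℝ) (hε : 0 < ε) (hM : 21 / ε ^ 2 ≤ (M : ℝ)) :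
    (1 - Real.exp (-(n : ℝ))) * (Fintype.card (Fin M → Fin n → Fin 4)) ≤
      ((Finset.univ.filter (fun F : Fin M → Fin n → Fin 4 =>
        ∀ L : List (Fin 4), (∀ i, (List.ofFn (F i)).Sublist L) →
          (2.5 - ε) * n ≤ (L.length : ℝ))).card : ℝ) := by
  have h25 : (2.5 : ℝ) = 5/2 := by norm_num
  set p : (Fin M → Fin n → Fin 4) → Prop := fun F =>
    ∀ L : List (Fin 4), (∀ i, (List.ofFn (F i)).Sublist L) → (2.5 - ε) * n ≤ (L.length : ℝ)
    with hp
  by_cases htriv : (5/2 - ε) * (n:ℝ) ≤ 0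
  · have hfil : (univ.filter p) = univ := by
      apply Finset.filter_true_of_mem
      intro F _
      intro L _
      rw [h25]
      calc (5/2 - ε) * (n:ℝ) ≤ 0 := htriv
        _ ≤ (L.length : ℝ) := Nat.cast_nonneg _
    rw [hfil]
    have h1 : (1 - Real.exp (-(n : ℝ))) ≤ 1 := by
      have := (Real.exp_pos (-(n:ℝ))).le
      linarith
    have h2 : (0:ℝ) ≤ (Fintype.card (Fin M → Fin n → Fin 4) : ℝ) := Nat.cast_nonneg _
    calc (1 - Real.exp (-(n : ℝ))) * (Fintype.card (Fin M → Fin n → Fin 4))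
        ≤ 1 * (Fintype.card (Fin M → Fin n → Fin 4)) := mul_le_mul_of_nonneg_right h1 h2
      _ = ((univ : Finset (Fin M → Fin n → Fin 4)).card : ℝ) := by
          rw [one_mul, Finset.card_univ]
  · push_neg at htriv
    have hn0 : n ≠ 0 := by
      rintro rfl
      simp at htriv
    have hn1 : 1 ≤ (n:ℝ) := by
      have : 1 ≤ n := Nat.one_le_iff_ne_zero.mpr hn0
      exact_mod_cast this
    set ℓ : ℕ := ⌊(5/2 - ε) * (n:ℝ)⌋₊ with hℓdef
    have hℓle : (ℓ:ℝ) ≤ (5/2 - ε) * n := Nat.floor_le htriv.le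
    -- bad set bound
    set bad : Finset (Fin M → Fin n → Fin 4) := univ.filter (fun F => ¬ p F) with hbad
    have hsub : bad ⊆ (univ : Finset (Fin ℓ → Fin 4)).biUnion
        (fun v => univ.filter (fun F : Fin M → Fin n → Fin 4 =>
          ∀ i, (List.ofFn (F i)).Sublist (List.ofFn v))) := by
      intro F hF
      rw [hbad, Finset.mem_filter] at hF
      obtain ⟨-, hFn⟩ := hF
      rw [hp] at hFn
      simp only [not_forall] at hFn
      obtain ⟨L, hLsub, hLlen⟩ := hFn
      push_neg at hLlen
      rw [h25] at hLlen
      have hLℓ : L.length ≤ ℓ := Nat.le_floor hLlen.le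
      set L' : List (Fin 4) := L ++ List.replicate (ℓ - L.length) 0 with hL'
      have hlen' : L'.length = ℓ := by
        rw [hL', List.length_append, List.length_replicate]
        omega
      obtain ⟨v, hv⟩ := aux_exists_ofFn L' hlen'
      rw [Finset.mem_biUnion]
      refine ⟨v, Finset.mem_univ _, ?_⟩
      rw [Finset.mem_filter]
      refine ⟨Finset.mem_univ _, fun i => ?_⟩
      rw [hv, hL']
      exact (hLsub i).trans (L.sublist_append_left _)
    have hpi : ∀ v : Fin ℓ → Fin 4,
        (univ.filter (fun F : Fin M → Fin n → Fin 4 =>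
          ∀ i, (List.ofFn (F i)).Sublist (List.ofFn v)))
        = Fintype.piFinset (fun _ : Fin M =>
            univ.filter (fun w : Fin n → Fin 4 => (List.ofFn w).Sublist (List.ofFn v))) := by
      intro v
      ext F
      simp [Fintype.mem_piFinset]
    have hcardv : ∀ v : Fin ℓ → Fin 4,
        (univ.filter (fun F : Fin M → Fin n → Fin 4 =>
          ∀ i, (List.ofFn (F i)).Sublist (List.ofFn v))).card
        = (univ.filter (fun w : Fin n → Fin 4 => (List.ofFn w).Sublist (List.ofFn v))).card ^ M := by
      intro v
      rw [hpi v, Fintype.card_piFinset]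
      rw [Finset.prod_const, Finset.card_univ, Fintype.card_fin]
    -- real bound on each fit count
    obtain ⟨lam, hlam⟩ : ∃ l : ℝ, l = 4*ε/9 := ⟨_, rfl⟩
    have hlam0 : 0 ≤ lam := by rw [hlam]; positivity
    have hfit : ∀ v : Fin ℓ → Fin 4,
        ((univ.filter (fun w : Fin n → Fin 4 => (List.ofFn w).Sublist (List.ofFn v))).card : ℝ)
          ≤ Real.exp (lam * ℓ) * (∑ u : Fin 4, Real.exp (-lam * ((u : ℕ) + 1))) ^ n := by
      intro v
      have h1 := aux_fits_card_le n (List.ofFn v)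
      have h2 := aux_rank_count_le n (List.ofFn v).length lam hlam0
      have h3 : (List.ofFn v).length = ℓ := List.length_ofFn
      calc ((univ.filter (fun w : Fin n → Fin 4 => (List.ofFn w).Sublist (List.ofFn v))).card : ℝ)
          ≤ ((univ.filter fun r : Fin n → Fin 4 =>
              ∑ i, ((r i : ℕ) + 1) ≤ (List.ofFn v).length).card : ℝ) := Nat.cast_le.mpr h1
        _ ≤ Real.exp (lam * (List.ofFn v).length) *
              (∑ u : Fin 4, Real.exp (-lam * ((u : ℕ) + 1))) ^ n := h2
        _ = Real.exp (lam * ℓ) * (∑ u : Fin 4, Real.exp (-lam * ((u : ℕ) + 1))) ^ n := by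
            rw [h3]
    -- bad card bound
    have hbadcard : ((bad.card : ℝ)) ≤ (4:ℝ)^ℓ *
        (Real.exp (lam * ℓ) * (∑ u : Fin 4, Real.exp (-lam * ((u : ℕ) + 1))) ^ n) ^ M := by
      have hb1 : bad.card ≤ ∑ v : Fin ℓ → Fin 4,
          (univ.filter (fun F : Fin M → Fin n → Fin 4 =>
            ∀ i, (List.ofFn (F i)).Sublist (List.ofFn v))).card :=
        le_trans (Finset.card_le_card hsub) (Finset.card_biUnion_le)
      have hb2 : ((bad.card : ℝ)) ≤ ∑ v : Fin ℓ → Fin 4,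
          (((univ.filter (fun w : Fin n → Fin 4 =>
            (List.ofFn w).Sublist (List.ofFn v))).card : ℝ)) ^ M := by
        calc ((bad.card : ℝ)) ≤ ((∑ v : Fin ℓ → Fin 4,
            (univ.filter (fun F : Fin M → Fin n → Fin 4 =>
              ∀ i, (List.ofFn (F i)).Sublist (List.ofFn v))).card : ℕ) : ℝ) := Nat.cast_le.mpr hb1
          _ = ∑ v : Fin ℓ → Fin 4, (((univ.filter (fun w : Fin n → Fin 4 =>
              (List.ofFn w).Sublist (List.ofFn v))).card : ℝ)) ^ M := by
              rw [Nat.cast_sum]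
              congr 1
              ext v
              rw [hcardv v]
              push_cast
              ring
      refine hb2.trans ?_
      have : ∀ v : Fin ℓ → Fin 4, (((univ.filter (fun w : Fin n → Fin 4 =>
            (List.ofFn w).Sublist (List.ofFn v))).card : ℝ)) ^ M
          ≤ (Real.exp (lam * ℓ) * (∑ u : Fin 4, Real.exp (-lam * ((u : ℕ) + 1))) ^ n) ^ M :=
        fun v => pow_le_pow_left₀ (Nat.cast_nonneg _) (hfit v) M
      calc ∑ v : Fin ℓ → Fin 4, (((univ.filter (fun w : Fin n → Fin 4 =>
            (List.ofFn w).Sublist (List.ofFn v))).card : ℝ)) ^ M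
          ≤ ∑ _v : Fin ℓ → Fin 4,
            (Real.exp (lam * ℓ) * (∑ u : Fin 4, Real.exp (-lam * ((u : ℕ) + 1))) ^ n) ^ M :=
            Finset.sum_le_sum (fun v _ => this v)
        _ = (4:ℝ)^ℓ * (Real.exp (lam * ℓ) *
              (∑ u : Fin 4, Real.exp (-lam * ((u : ℕ) + 1))) ^ n) ^ M := by
            simp only [Finset.sum_const, Finset.card_univ, nsmul_eq_mul,
              Fintype.card_fun, Fintype.card_fin]
            push_cast
            ring
    have hmaster := aux_master n M ℓ ε hε hn1 hM hℓle
    rw [← hlam] at hmaster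
    have hbadfinal : ((bad.card : ℝ)) ≤ Real.exp (-(n:ℝ)) * ((4:ℝ)^n)^M :=
      hbadcard.trans hmaster
    -- total card
    have hcardtot : ((Fintype.card (Fin M → Fin n → Fin 4) : ℝ)) = ((4:ℝ)^n)^M := by
      simp only [Fintype.card_fun, Fintype.card_fin]
      push_cast
      ring
    have hsplit : (univ.filter p).card + bad.card = Fintype.card (Fin M → Fin n → Fin 4) := by
      rw [hbad]
      rw [Finset.card_filter_add_card_filter_not]
      exact Finset.card_univ
    have hsplit' : ((univ.filter p).card : ℝ) + (bad.card : ℝ)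
        = (Fintype.card (Fin M → Fin n → Fin 4) : ℝ) := by
      exact_mod_cast hsplit
    have key : (1 - Real.exp (-(n:ℝ))) * ((4:ℝ)^n)^M ≤ ((univ.filter p).card : ℝ) := by
      have expand : (1 - Real.exp (-(n:ℝ))) * ((4:ℝ)^n)^M
          = ((4:ℝ)^n)^M - Real.exp (-(n:ℝ)) * ((4:ℝ)^n)^M := by ring
      linarith [hbadfinal, hsplit', expand.le, expand.ge]
    rw [hcardtot]
    exact key
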